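/- Let ρ_0, ρ_1 be density matrices with Tr(E_1 ρ_0) = 0 for a USD POVM {E_0, E_1, E_?}, with non-identical supports. Writing P_1 for the orthogonal projection onto the range of ρ_1, the partial failure probability Q_0 = η_0 Tr(E_? ρ_0) satisfies Q_0 ≥ η_0 Tr(P_1 ρ_0). -/

import Mathlib

open Matrix ComplexOrder

private lemma trace_psd_nonneg {n : ℕ} {A : Matrix (Fin n) (Fin n) ℂ}
    (hA : A.PosSemidef) : 0 ≤ A.trace := by
  rw [Matrix.trace]
  apply Finset.sum_nonneg
  intro i _
  exact hA.diag_nonneg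

open scoped MatrixOrder in
noncomputable def Matrix.PosSemidef.sqrt {n : ℕ} {A : Matrix (Fin n) (Fin n) ℂ}
    (_ : A.PosSemidef) : Matrix (Fin n) (Fin n) ℂ := CFC.sqrt A

open scoped MatrixOrder in
lemma Matrix.PosSemidef.posSemidef_sqrt {n : ℕ} {A : Matrix (Fin n) (Fin n) ℂ}
    (hA : A.PosSemidef) : hA.sqrt.PosSemidef :=
  Matrix.nonneg_iff_posSemidef.mp (CFC.sqrt_nonneg A)

open scoped MatrixOrder in
lemma Matrix.PosSemidef.sqrt_mul_self {n : ℕ} {A : Matrix (Fin n) (Fin n) ℂ}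
    (hA : A.PosSemidef) : hA.sqrt * hA.sqrt = A :=
  CFC.sqrt_mul_sqrt_self A (Matrix.nonneg_iff_posSemidef.mpr hA)

private lemma trace_mul_psd_nonneg {n : ℕ} {A B : Matrix (Fin n) (Fin n) ℂ}
    (hA : A.PosSemidef) (hB : B.PosSemidef) : 0 ≤ (A * B).trace := by
  obtain ⟨C, hC⟩ : ∃ C, A = Cᴴ * C :=
    ⟨hA.sqrt, by rw [hA.posSemidef_sqrt.1.eq, hA.sqrt_mul_self]⟩
  have : (A * B).trace = (C * B * Cᴴ).trace := by
    rw [hC, Matrix.mul_assoc, Matrix.trace_mul_comm]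
  rw [this]
  exact trace_psd_nonneg (hB.mul_mul_conjTranspose_same C)

private lemma mul_eq_zero_of_trace_mul_eq_zero {n : ℕ} {A B : Matrix (Fin n) (Fin n) ℂ}
    (hA : A.PosSemidef) (hB : B.PosSemidef) (h : (A * B).trace = 0) : A * B = 0 := by
  have hS := hA.posSemidef_sqrt
  have hT := hB.posSemidef_sqrt
  have hSA : hA.sqrt * hA.sqrt = A := hA.sqrt_mul_self
  have hTB : hB.sqrt * hB.sqrt = B := hB.sqrt_mul_self
  have key : hA.sqrt * hB.sqrt = 0 := by
    have h1 : ((hA.sqrt * hB.sqrt)ᴴ * (hA.sqrt * hB.sqrt)).trace = 0 := by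
      rw [Matrix.conjTranspose_mul, hS.1.eq, hT.1.eq]
      calc (hB.sqrt * hA.sqrt * (hA.sqrt * hB.sqrt)).trace
          = (hB.sqrt * (hA.sqrt * hA.sqrt * hB.sqrt)).trace := by
            simp only [Matrix.mul_assoc]
        _ = (hA.sqrt * hA.sqrt * hB.sqrt * hB.sqrt).trace := by
            rw [Matrix.trace_mul_comm]
        _ = (A * B).trace := by rw [hSA, Matrix.mul_assoc, hTB]
        _ = 0 := h
    have h2 : (hA.sqrt * hB.sqrt)ᴴ * (hA.sqrt * hB.sqrt) = 0 := by
      set M := hA.sqrt * hB.sqrt with hMdef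
      have hentry : ∀ k l, (star (M k l)) * M k l = 0 := by
        have hsum : ∑ i, ∑ k, star (M k i) * M k i = 0 := by
          have heq : (Mᴴ * M).trace = ∑ i, ∑ k, star (M k i) * M k i := by
            simp [Matrix.trace, Matrix.mul_apply, Matrix.diag, Matrix.conjTranspose_apply]
          rw [← heq]; exact h1
        intro k l
        have hnn : ∀ i ∈ Finset.univ, (0:ℂ) ≤ ∑ k, star (M k i) * M k i :=
          fun i _ => Finset.sum_nonneg fun k _ => star_mul_self_nonneg _
        have hcol := (Finset.sum_eq_zero_iff_of_nonneg hnn).mp hsum l (Finset.mem_univ l)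
        have hnn2 : ∀ k ∈ Finset.univ, (0:ℂ) ≤ star (M k l) * M k l :=
          fun k _ => star_mul_self_nonneg _
        exact (Finset.sum_eq_zero_iff_of_nonneg hnn2).mp hcol k (Finset.mem_univ k)
      have hM0 : M = 0 := by
        ext i j
        rcases mul_eq_zero.mp (hentry i j) with h' | h'
        · simpa using star_eq_zero.mp h'
        · simpa using h'
      rw [hM0]; simp
    exact Matrix.conjTranspose_mul_self_eq_zero.mp h2
  have step : A * B = hA.sqrt * (hA.sqrt * hB.sqrt) * hB.sqrt := by
    conv_lhs => rw [← hSA, ← hTB]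
    simp only [Matrix.mul_assoc]
  rw [step, key, Matrix.mul_zero, Matrix.zero_mul]

/-- For a USD POVM `{E₀, E₁, E?}` on density matrices `ρ₀`, `ρ₁` with
non-identical supports, writing `P₁` for the orthogonal projection onto the
range of `ρ₁`, the partial failure probability satisfies
`η₀ Tr(E? ρ₀) ≥ η₀ Tr(P₁ ρ₀)`. -/
theorem partial_failure_ge_proj_trace {n : ℕ}
    {ρ₀ ρ₁ E₀ E₁ Eq P₁ : Matrix (Fin n) (Fin n) ℂ}
    (h₀ : ρ₀.PosSemidef) (h₁ : ρ₁.PosSemidef)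
    (ht₀ : ρ₀.trace = 1) (ht₁ : ρ₁.trace = 1)
    (hE₀ : E₀.PosSemidef) (hE₁ : E₁.PosSemidef) (hEq : Eq.PosSemidef)
    (hsum : E₀ + E₁ + Eq = 1)
    (hU₀ : (E₀ * ρ₁).trace = 0) (hU₁ : (E₁ * ρ₀).trace = 0)
    (hsupp : LinearMap.range ρ₀.mulVecLin ≠ LinearMap.range ρ₁.mulVecLin)
    (hP₁proj : P₁ * P₁ = P₁) (hP₁herm : P₁ᴴ = P₁)
    (hP₁range : LinearMap.range P₁.mulVecLin = LinearMap.range ρ₁.mulVecLin)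
    {η₀ : ℝ} (hη₀ : 0 < η₀) :
    η₀ * ((P₁ * ρ₀).trace).re ≤ η₀ * ((Eq * ρ₀).trace).re := by
  -- Step 1: E₀ * ρ₁ = 0
  have hE₀ρ₁ : E₀ * ρ₁ = 0 := mul_eq_zero_of_trace_mul_eq_zero hE₀ h₁ hU₀
  -- Step 2: E₀ * P₁ = 0
  have hE₀P₁ : E₀ * P₁ = 0 := by
    have hrange : ∀ v, E₀ *ᵥ (P₁ *ᵥ v) = 0 := by
      intro v
      have hmem : P₁ *ᵥ v ∈ LinearMap.range ρ₁.mulVecLin := by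
        rw [← hP₁range]; exact ⟨v, rfl⟩
      obtain ⟨w, hw⟩ := hmem
      rw [← hw]
      show E₀ *ᵥ (ρ₁ *ᵥ w) = 0
      rw [Matrix.mulVec_mulVec, hE₀ρ₁, Matrix.zero_mulVec]
    ext i j
    have := congrFun (hrange (Pi.single j 1)) i
    rw [Matrix.mulVec_mulVec] at this
    simpa [Matrix.mulVec_single] using this
  have hP₁E₀ : P₁ * E₀ = 0 := by
    have := congrArg Matrix.conjTranspose hE₀P₁
    rwa [Matrix.conjTranspose_mul, hP₁herm, hE₀.1.eq, Matrix.conjTranspose_zero] at this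
  -- Step 3: M := (1 - P₁)(E₁ + Eq)(1 - P₁) is PSD and equals 1 - P₁ - E₀
  have hM : ((1 - P₁) * (E₁ + Eq) * (1 - P₁)).PosSemidef := by
    have h1P : (1 - P₁)ᴴ = 1 - P₁ := by
      rw [Matrix.conjTranspose_sub, Matrix.conjTranspose_one, hP₁herm]
    have := (hE₁.add hEq).mul_mul_conjTranspose_same (1 - P₁)
    rwa [h1P] at this
  have hE₁Eq : E₁ + Eq = 1 - E₀ := by rw [← hsum]; abel
  have hMeq : (1 - P₁) * (E₁ + Eq) * (1 - P₁) = 1 - P₁ - E₀ := by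
    rw [hE₁Eq]
    simp only [Matrix.mul_sub, Matrix.sub_mul, Matrix.one_mul, Matrix.mul_one,
      hP₁proj, hP₁E₀, hE₀P₁, sub_zero, zero_sub]
    abel
  -- Step 4: Eq - P₁ = M - E₁, hence trace((Eq - P₁) ρ₀) = trace(M ρ₀) ≥ 0
  have hEqP₁ : Eq - P₁ = (1 - P₁) * (E₁ + Eq) * (1 - P₁) - E₁ := by
    rw [hMeq]
    have hEqEq : Eq = 1 - E₀ - E₁ := by rw [← hsum]; abel
    rw [hEqEq]; abel
  have htr : ((Eq - P₁) * ρ₀).trace = ((1 - P₁) * (E₁ + Eq) * (1 - P₁) * ρ₀).trace := by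
    rw [hEqP₁, Matrix.sub_mul, Matrix.trace_sub, hU₁, sub_zero]
  have hnn : 0 ≤ ((Eq - P₁) * ρ₀).trace := by
    rw [htr]
    exact trace_mul_psd_nonneg hM h₀
  have hre : 0 ≤ (((Eq * ρ₀).trace) - ((P₁ * ρ₀).trace)).re := by
    have : (Eq - P₁) * ρ₀ = Eq * ρ₀ - P₁ * ρ₀ := Matrix.sub_mul _ _ _
    rw [this, Matrix.trace_sub] at hnn
    exact (Complex.le_def.mp hnn).1
  rw [Complex.sub_re] at hre
  have : ((P₁ * ρ₀).trace).re ≤ ((Eq * ρ₀).trace).re := by linarith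
  exact mul_le_mul_of_nonneg_left this hη₀.le
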